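/- arXiv:2203.06764 — 2 statements merged into one kernel-verified Lean document; each statement's English description precedes it below -/
import Mathlib

section
/- (Theorem 1, vector form) Let h be a random vector in ℂ^n and x, x̃ ∈ ℂ^n fixed, with H = Fh, X = Fx, X̃ = Fx̃ the discrete Fourier transforms. If the random vectors h * x and h * x̃ (circular convolutions) have the same distribution and each component H_k has finite second moment, then for every frequency k with E[|H_k|²] > 0 we have |X_k| = |X̃_k|. -/
open MeasureTheory ProbabilityTheory Complex ENNReal

/-- Circular convolution of two vectors in `ℂ^n`. -/
noncomputable def circConv {n : ℕ} (a b : Fin n → ℂ) : Fin n → ℂ :=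
  fun k => ∑ j : Fin n, a j * b (k - j)

/-- Discrete Fourier transform on `ℂ^n`. -/
noncomputable def dft {n : ℕ} (x : Fin n → ℂ) : Fin n → ℂ :=
  fun k => ∑ j : Fin n,
    x j * Complex.exp (-2 * Real.pi * Complex.I * ((k : ℕ) : ℂ) * ((j : ℕ) : ℂ) / (n : ℂ))

lemma pow_mod_eq {ω : ℂ} {n : ℕ} (hω : ω ^ n = 1) (m : ℕ) : ω ^ (m % n) = ω ^ m := by
  conv_rhs => rw [← Nat.div_add_mod m n]
  rw [pow_add, pow_mul, hω, one_pow, one_mul]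

/-- The convolution theorem for the discrete Fourier transform. -/
lemma dft_circConv {n : ℕ} (a b : Fin n → ℂ) (k : Fin n) :
    dft (circConv a b) k = dft a k * dft b k := by
  have hn : 0 < n := k.pos
  haveI : NeZero n := ⟨hn.ne'⟩
  set ω : ℂ := Complex.exp (-2 * Real.pi * Complex.I * ((k : ℕ) : ℂ) / (n : ℂ)) with hωdef
  have hexp : ∀ j : ℕ, Complex.exp (-2 * Real.pi * Complex.I * ((k : ℕ) : ℂ) * (j : ℂ) / (n : ℂ))
      = ω ^ j := by
    intro j
    rw [hωdef, ← Complex.exp_nat_mul]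
    ring_nf
  have hω1 : ω ^ n = 1 := by
    rw [hωdef, ← Complex.exp_nat_mul]
    have hn' : (n : ℂ) ≠ 0 := Nat.cast_ne_zero.mpr hn.ne'
    have : (n : ℂ) * (-2 * Real.pi * Complex.I * ((k : ℕ) : ℂ) / (n : ℂ))
        = ((-(k : ℕ) : ℤ) : ℂ) * (2 * Real.pi * Complex.I) := by
      push_cast; field_simp
    rw [this, Complex.exp_int_mul_two_pi_mul_I]
  have key : ∀ j : Fin n, (∑ m : Fin n, a j * b (m - j) * ω ^ (m : ℕ))
      = (a j * ω ^ (j : ℕ)) * ∑ m : Fin n, b m * ω ^ (m : ℕ) := by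
    intro j
    rw [Finset.mul_sum]
    refine Fintype.sum_equiv (Equiv.subRight j) _ _ fun m => ?_
    have h1 : ω ^ ((j : ℕ)) * ω ^ (((m - j) : Fin n) : ℕ) = ω ^ (m : ℕ) := by
      rw [← pow_add, ← pow_mod_eq hω1 ((j : ℕ) + (((m - j) : Fin n) : ℕ))]
      have h2 : ((j + (m - j)) : Fin n) = m := by abel
      rw [← Fin.val_add, h2]
    simp only [Equiv.subRight_apply]
    rw [← h1]; ring
  simp only [dft, circConv, hexp, Finset.sum_mul]
  rw [Finset.sum_comm]
  rw [Finset.sum_congr rfl fun j _ => key j, ← Finset.sum_mul]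

/-- Theorem 1, vector form. -/
theorem stmt5 {Ω : Type*} [MeasurableSpace Ω] (μ : Measure Ω) [IsProbabilityMeasure μ]
    {n : ℕ} (h : Ω → Fin n → ℂ) (x xt : Fin n → ℂ)
    (hfin : ∀ k : Fin n, Integrable (fun ω => ‖dft (h ω) k‖ ^ 2) μ)
    (hid : IdentDistrib (fun ω => circConv (h ω) x) (fun ω => circConv (h ω) xt) μ μ) :
    ∀ k : Fin n, 0 < ∫ ω, ‖dft (h ω) k‖ ^ 2 ∂μ →
      ‖dft x k‖ = ‖dft xt k‖ := by
  intro k hk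
  have hm : Measurable (fun v : Fin n → ℂ => ‖dft v k‖ ^ 2) := by
    have : Continuous (fun v : Fin n → ℂ => ‖dft v k‖ ^ 2) := by
      unfold dft
      exact (continuous_norm.comp (continuous_finset_sum _ fun j _ =>
        (continuous_apply j).mul continuous_const)).pow 2
    exact this.measurable
  have h1 : IdentDistrib (fun ω => ‖dft (circConv (h ω) x) k‖ ^ 2)
      (fun ω => ‖dft (circConv (h ω) xt) k‖ ^ 2) μ μ := hid.comp hm
  have h2 := h1.integral_eq
  simp only [dft_circConv, norm_mul, mul_pow] at h2
  rw [integral_mul_const, integral_mul_const] at h2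
  have hE := mul_left_cancel₀ hk.ne' h2
  have hx : (0:ℝ) ≤ ‖dft x k‖ := norm_nonneg _
  have hxt : (0:ℝ) ≤ ‖dft xt k‖ := norm_nonneg _
  nlinarith [hE, hx, hxt]
end

section
/- (Corollary 1, vector form) Let h be a random vector in ℂ^n and x, x̃ ∈ ℂ^n fixed, with H = Fh the discrete Fourier transform of h. If h * x and h * x̃ have the same distribution and E[H_k] ≠ 0 for every frequency index k, then x = x̃. -/
open MeasureTheory ProbabilityTheory Complex ENNReal

namespace Stmt6Aux

noncomputable def e (n : ℕ) (d : ℤ) : ℂ :=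
  Complex.exp (2 * Real.pi * Complex.I * (d : ℂ) / (n : ℂ))

lemma e_add (n : ℕ) (a b : ℤ) : e n (a + b) = e n a * e n b := by
  rw [e, e, e, ← Complex.exp_add]
  congr 1
  push_cast
  ring

lemma e_nmul (n : ℕ) (hn : 0 < n) (q : ℤ) : e n ((n : ℤ) * q) = 1 := by
  have hne : (n : ℂ) ≠ 0 := Nat.cast_ne_zero.mpr hn.ne'
  rw [e]
  have h1 : 2 * (Real.pi : ℂ) * Complex.I * (((n : ℤ) * q : ℤ) : ℂ) / (n : ℂ)
      = (q : ℂ) * (2 * Real.pi * Complex.I) := by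
    push_cast
    field_simp
  rw [h1, Complex.exp_int_mul_two_pi_mul_I]

lemma e_periodic (n : ℕ) (hn : 0 < n) (a q : ℤ) : e n (a + n * q) = e n a := by
  rw [e_add, e_nmul n hn, mul_one]

lemma dft_eq {n : ℕ} (x : Fin n → ℂ) (k : Fin n) :
    dft x k = ∑ j : Fin n, x j * e n (-((k : ℤ) * (j : ℤ))) := by
  unfold dft e
  refine Finset.sum_congr rfl fun j _ => ?_
  congr 2
  push_cast
  ring

lemma sum_e (n : ℕ) (hn : 0 < n) (d : ℤ) :
    ∑ k : Fin n, e n ((k : ℤ) * d) = if (n : ℤ) ∣ d then (n : ℂ) else 0 := by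
  have hne : (n : ℂ) ≠ 0 := Nat.cast_ne_zero.mpr hn.ne'
  have hpow : ∀ k : ℕ, e n ((k : ℤ) * d) = (e n d) ^ k := by
    intro k
    rw [e, e, ← Complex.exp_nat_mul]
    congr 1
    push_cast
    ring
  have hsum : ∑ k : Fin n, e n ((k : ℤ) * d) = ∑ k ∈ Finset.range n, (e n d) ^ k := by
    rw [Fin.sum_univ_eq_sum_range (fun k => e n ((k : ℤ) * d))]
    exact Finset.sum_congr rfl fun k _ => hpow k
  rw [hsum]
  by_cases hdvd : (n : ℤ) ∣ d
  · obtain ⟨q, hq⟩ := hdvd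
    rw [if_pos ⟨q, hq⟩, hq, e_nmul n hn]
    simp
  · rw [if_neg hdvd]
    have hz1 : e n d ≠ 1 := by
      intro heq
      rw [e, Complex.exp_eq_one_iff] at heq
      obtain ⟨m, hm⟩ := heq
      apply hdvd
      refine ⟨m, ?_⟩
      have h2πI : (2 : ℂ) * Real.pi * Complex.I ≠ 0 := by
        simp [Real.pi_ne_zero, Complex.I_ne_zero]
      have hd : (d : ℂ) = (n : ℂ) * (m : ℂ) := by
        field_simp at hm
        apply mul_left_cancel₀ h2πI
        linear_combination (2 * Real.pi * Complex.I) * hm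
      exact_mod_cast hd
    have hzn : (e n d) ^ n = 1 := by
      rw [e, ← Complex.exp_nat_mul]
      have : (n : ℂ) * (2 * Real.pi * Complex.I * (d : ℂ) / (n : ℂ))
          = (d : ℂ) * (2 * Real.pi * Complex.I) := by
        field_simp
      rw [this, Complex.exp_int_mul_two_pi_mul_I]
    rw [geom_sum_eq hz1, hzn, sub_self, zero_div]

lemma sum_e_fin (n : ℕ) (hn : 0 < n) (j m : Fin n) :
    ∑ k : Fin n, e n ((k : ℤ) * ((m : ℤ) - (j : ℤ))) = if j = m then (n : ℂ) else 0 := by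
  rw [sum_e n hn]
  by_cases hjm : j = m
  · rw [if_pos, if_pos hjm]
    subst hjm; simp
  · rw [if_neg, if_neg hjm]
    intro hdvd
    apply hjm
    have habs : |(m : ℤ) - (j : ℤ)| < (n : ℤ) := by
      rw [abs_sub_lt_iff]
      constructor <;> [skip; skip] <;>
        · have := m.isLt; have := j.isLt; omega
    have := Int.eq_zero_of_abs_lt_dvd hdvd habs
    have : (j : ℤ) = (m : ℤ) := by omega
    exact Fin.ext (by exact_mod_cast this)

lemma e_fin_add {n : ℕ} (hn : 0 < n) (k u v : Fin n) :
    e n (-((k : ℤ) * ((u + v : Fin n) : ℤ))) =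
      e n (-((k : ℤ) * (u : ℤ))) * e n (-((k : ℤ) * (v : ℤ))) := by
  obtain ⟨q, hq⟩ : ∃ q : ℤ, (u : ℤ) + (v : ℤ) = ((u + v : Fin n) : ℤ) + (n : ℤ) * q := by
    refine ⟨(((u : ℕ) + (v : ℕ)) / n : ℕ), ?_⟩
    have hval : ((u + v : Fin n) : ℕ) = ((u : ℕ) + (v : ℕ)) % n := by
      simp [Fin.add_def]
    have hnat : (u : ℕ) + (v : ℕ)
        = ((u + v : Fin n) : ℕ) + n * (((u : ℕ) + (v : ℕ)) / n) := by
      rw [hval]; exact (Nat.mod_add_div _ _).symm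
    exact_mod_cast hnat
  rw [← e_add]
  have h1 : -((k : ℤ) * (u : ℤ)) + -((k : ℤ) * (v : ℤ))
      = -((k : ℤ) * ((u + v : Fin n) : ℤ)) + (n : ℤ) * (-((k : ℤ) * q)) := by
    linear_combination (-(k : ℤ)) * hq
  rw [h1, e_periodic n hn]

lemma dft_circConv {n : ℕ} (a b : Fin n → ℂ) (k : Fin n) :
    dft (circConv a b) k = dft a k * dft b k := by
  rcases Nat.eq_zero_or_pos n with hn | hn
  · subst hn; exact k.elim0
  haveI : NeZero n := ⟨hn.ne'⟩
  simp only [dft_eq, circConv]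
  calc ∑ m : Fin n, (∑ j : Fin n, a j * b (m - j)) * e n (-((k : ℤ) * (m : ℤ)))
      = ∑ m : Fin n, ∑ j : Fin n, a j * b (m - j) * e n (-((k : ℤ) * (m : ℤ))) := by
        refine Finset.sum_congr rfl fun m _ => ?_
        rw [Finset.sum_mul]
    _ = ∑ j : Fin n, ∑ m : Fin n, a j * b (m - j) * e n (-((k : ℤ) * (m : ℤ))) :=
        Finset.sum_comm
    _ = ∑ j : Fin n, a j * e n (-((k : ℤ) * (j : ℤ))) * ∑ t : Fin n, b t * e n (-((k : ℤ) * (t : ℤ))) := by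
        refine Finset.sum_congr rfl fun j _ => ?_
        rw [Finset.mul_sum]
        refine (Fintype.sum_bijective (fun t => j + t) (Equiv.addLeft j).bijective _ _
          fun t => ?_).symm
        rw [add_sub_cancel_left, e_fin_add hn k j t]
        ring
    _ = (∑ j : Fin n, a j * e n (-((k : ℤ) * (j : ℤ)))) *
          ∑ t : Fin n, b t * e n (-((k : ℤ) * (t : ℤ))) := by
        rw [Finset.sum_mul]

lemma dft_injective (n : ℕ) : Function.Injective (dft (n := n)) := by
  rcases Nat.eq_zero_or_pos n with hn | hn
  · subst hn
    intro x y _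
    funext m
    exact m.elim0
  have hne : (n : ℂ) ≠ 0 := Nat.cast_ne_zero.mpr hn.ne'
  intro x y hxy
  funext m
  have key : ∀ z : Fin n → ℂ,
      ∑ k : Fin n, dft z k * e n ((k : ℤ) * (m : ℤ)) = (n : ℂ) * z m := by
    intro z
    calc ∑ k : Fin n, dft z k * e n ((k : ℤ) * (m : ℤ))
        = ∑ k : Fin n, ∑ j : Fin n,
            z j * (e n (-((k : ℤ) * (j : ℤ))) * e n ((k : ℤ) * (m : ℤ))) := by
          refine Finset.sum_congr rfl fun k _ => ?_
          rw [dft_eq, Finset.sum_mul]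
          exact Finset.sum_congr rfl fun j _ => by ring
      _ = ∑ j : Fin n, z j * ∑ k : Fin n, e n ((k : ℤ) * ((m : ℤ) - (j : ℤ))) := by
          rw [Finset.sum_comm]
          refine Finset.sum_congr rfl fun j _ => ?_
          rw [Finset.mul_sum]
          refine Finset.sum_congr rfl fun k _ => ?_
          rw [← e_add]
          congr 2
          ring
      _ = (n : ℂ) * z m := by
          simp only [sum_e_fin n hn, mul_ite, mul_zero, Finset.sum_ite_eq',
            Finset.mem_univ, if_true]
          ring
  have h1 : (n : ℂ) * x m = (n : ℂ) * y m := by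
    rw [← key x, ← key y, hxy]
  exact mul_left_cancel₀ hne h1

lemma measurable_dft {n : ℕ} (k : Fin n) : Measurable fun v : Fin n → ℂ => dft v k := by
  unfold dft
  exact Finset.measurable_sum _ fun j _ => (measurable_pi_apply j).mul_const _

end Stmt6Aux

/-- Corollary 1, vector form. -/
theorem stmt6 {Ω : Type*} [MeasurableSpace Ω] (μ : Measure Ω) [IsProbabilityMeasure μ]
    {n : ℕ} (h : Ω → Fin n → ℂ) (x xt : Fin n → ℂ)
    (hint : ∀ k : Fin n, Integrable (fun ω => dft (h ω) k) μ)
    (hE : ∀ k : Fin n, ∫ ω, dft (h ω) k ∂μ ≠ 0)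
    (hid : IdentDistrib (fun ω => circConv (h ω) x) (fun ω => circConv (h ω) xt) μ μ) :
    x = xt := by
  apply Stmt6Aux.dft_injective n
  funext k
  have hid' : IdentDistrib (fun ω => dft (circConv (h ω) x) k)
      (fun ω => dft (circConv (h ω) xt) k) μ μ :=
    hid.comp (Stmt6Aux.measurable_dft k)
  have hEeq := hid'.integral_eq
  simp only [Stmt6Aux.dft_circConv] at hEeq
  rw [integral_mul_const, integral_mul_const] at hEeq
  exact mul_left_cancel₀ (hE k) hEeq
end
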